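/- arXiv:1303.4289 — 2 statements merged into one kernel-verified Lean document; each statement's English description precedes it below -/
import Mathlib

section
/- Fix a channel coefficient h ∈ ℂ with h ≠ 0. Then the MVU filter f_MVU = x/‖x‖² is a global minimizer of the zeroth-order excess MSE for the ZF equalizer with deterministic channel: for every nonzero filter f ∈ ℂ^B, Me_dc(f_MVU) ≤ Me_dc(f). (Proposition 3: the MVU is an optimal channel estimator for minimizing [MSE_xe^dc(ZF)]_0.) -/
open MeasureTheory

/-- `φ(f) = fᴴ x = Σᵢ conj(fᵢ)·xᵢ`. -/
noncomputable def phi {B : ℕ} (x f : Fin B → ℂ) : ℂ :=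
  ∑ i, (starRingEnd ℂ) (f i) * x i

/-- Squared Euclidean norm `‖f‖² = Σᵢ |fᵢ|²`. -/
noncomputable def nsq {B : ℕ} (f : Fin B → ℂ) : ℝ :=
  ∑ i, Complex.normSq (f i)

/-- Zeroth-order excess MSE of the ZF equalizer, deterministic channel `h`. -/
noncomputable def MeDc {B : ℕ} (σx2 σw2 : ℝ) (h : ℂ) (x f : Fin B → ℂ) : ℝ :=
  ((Complex.normSq h * Complex.normSq (phi x f - 1) + σw2 * nsq f) /
    (Complex.normSq h * Complex.normSq (phi x f) + σw2 * nsq f)) *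
    (σx2 + σw2 / Complex.normSq h)

/-- The MVU channel-estimating filter `f_MVU = x / ‖x‖²`. -/
noncomputable def fMVU {B : ℕ} (x : Fin B → ℂ) : Fin B → ℂ :=
  fun i => x i / (nsq x : ℂ)

lemma nsq_nonneg {B : ℕ} (f : Fin B → ℂ) : 0 ≤ nsq f :=
  Finset.sum_nonneg fun i _ => Complex.normSq_nonneg _

lemma nsq_pos {B : ℕ} {f : Fin B → ℂ} (hf : f ≠ 0) : 0 < nsq f := by
  rcases Function.ne_iff.mp hf with ⟨i, hi⟩
  have : 0 < Complex.normSq (f i) := by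
    simpa [Complex.normSq_pos] using hi
  refine lt_of_lt_of_le this ?_
  exact Finset.single_le_sum (fun j _ => Complex.normSq_nonneg _) (Finset.mem_univ i)

lemma cs {B : ℕ} (x f : Fin B → ℂ) :
    Complex.normSq (phi x f) ≤ nsq f * nsq x := by
  have h1 : ‖(inner (𝕜 := ℂ) ((WithLp.equiv 2 (Fin B → ℂ)).symm f) ((WithLp.equiv 2 (Fin B → ℂ)).symm x))‖
      ≤ ‖((WithLp.equiv 2 (Fin B → ℂ)).symm f)‖ * ‖((WithLp.equiv 2 (Fin B → ℂ)).symm x)‖ :=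
    norm_inner_le_norm _ _
  have hphi : (inner (𝕜 := ℂ) ((WithLp.equiv 2 (Fin B → ℂ)).symm f) ((WithLp.equiv 2 (Fin B → ℂ)).symm x))
      = phi x f := by
    simp [PiLp.inner_apply, phi, RCLike.inner_apply, mul_comm]
  have hf : ‖((WithLp.equiv 2 (Fin B → ℂ)).symm f)‖ ^ 2 = nsq f := by
    rw [EuclideanSpace.norm_eq, Real.sq_sqrt (by positivity)]
    simp [nsq, Complex.normSq_eq_norm_sq]
  have hx : ‖((WithLp.equiv 2 (Fin B → ℂ)).symm x)‖ ^ 2 = nsq x := by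
    rw [EuclideanSpace.norm_eq, Real.sq_sqrt (by positivity)]
    simp [nsq, Complex.normSq_eq_norm_sq]
  have h2 : ‖phi x f‖ ^ 2 ≤ (‖((WithLp.equiv 2 (Fin B → ℂ)).symm f)‖ * ‖((WithLp.equiv 2 (Fin B → ℂ)).symm x)‖) ^ 2 := by
    rw [← hphi]
    exact pow_le_pow_left₀ (norm_nonneg _) h1 2
  calc Complex.normSq (phi x f) = ‖phi x f‖ ^ 2 := by
        rw [Complex.normSq_eq_norm_sq]
    _ ≤ (‖((WithLp.equiv 2 (Fin B → ℂ)).symm f)‖ * ‖((WithLp.equiv 2 (Fin B → ℂ)).symm x)‖) ^ 2 := h2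
    _ = nsq f * nsq x := by rw [mul_pow, hf, hx]

lemma phi_fMVU {B : ℕ} {x : Fin B → ℂ} (hx : x ≠ 0) : phi x (fMVU x) = 1 := by
  have hs : (0:ℝ) < nsq x := nsq_pos hx
  have hs' : (nsq x : ℂ) ≠ 0 := by exact_mod_cast ne_of_gt hs
  unfold phi fMVU
  have : ∀ i : Fin B, (starRingEnd ℂ) (x i / (nsq x : ℂ)) * x i
      = ((Complex.normSq (x i) : ℝ) : ℂ) / (nsq x : ℂ) := by
    intro i
    rw [map_div₀, Complex.conj_ofReal, div_mul_eq_mul_div]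
    congr 1
    rw [mul_comm]
    exact Complex.mul_conj (x i)
  rw [Finset.sum_congr rfl (fun i _ => this i), ← Finset.sum_div]
  rw [← Complex.ofReal_sum]
  show ((nsq x : ℝ) : ℂ) / (nsq x : ℂ) = 1
  exact div_self hs'

lemma nsq_fMVU {B : ℕ} {x : Fin B → ℂ} (hx : x ≠ 0) : nsq (fMVU x) = 1 / nsq x := by
  have hs : (0:ℝ) < nsq x := nsq_pos hx
  unfold nsq fMVU
  have : ∀ i : Fin B, Complex.normSq (x i / ((nsq x : ℝ) : ℂ))
      = Complex.normSq (x i) / (nsq x * nsq x) := by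
    intro i
    rw [Complex.normSq_div, Complex.normSq_ofReal]
  rw [Finset.sum_congr rfl (fun i _ => this i), ← Finset.sum_div]
  show nsq x / (nsq x * nsq x) = 1 / nsq x
  field_simp

/-- Proposition 3: the MVU filter is a global minimizer of the zeroth-order
excess MSE `[MSE_xe^dc(ZF)]₀` for a deterministic channel. -/
theorem mvu_optimal_zeroth_order_excess_mse_dc
    (B : ℕ) (hB : 1 ≤ B) (x : Fin B → ℂ) (hx : x ≠ 0)
    (σx2 σw2 : ℝ) (hσx : 0 < σx2) (hσw : 0 < σw2)
    (h : ℂ) (hh : h ≠ 0) :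
    ∀ f : Fin B → ℂ, f ≠ 0 →
      MeDc σx2 σw2 h x (fMVU x) ≤ MeDc σx2 σw2 h x f := by
  intro f hf
  set A := Complex.normSq h with hAdef
  have hA : 0 < A := Complex.normSq_pos.mpr hh
  have hs : 0 < nsq x := nsq_pos hx
  have hn : 0 < nsq f := nsq_pos hf
  set s := nsq x
  set n := nsq f
  set m := 1 / s with hmdef
  have hm : 0 < m := by positivity
  have hms : m * s = 1 := by rw [hmdef, one_div, inv_mul_cancel₀ hs.ne']
  set p := phi x f
  have hcs : Complex.normSq p ≤ n * s := by
    have := cs x f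
    linarith [this]
  have key : m * Complex.normSq p ≤ n := by
    calc m * Complex.normSq p ≤ m * (n * s) := by
          exact mul_le_mul_of_nonneg_left hcs hm.le
      _ = n * (m * s) := by ring
      _ = n := by rw [hms]; ring
  have hC : 0 < σx2 + σw2 / A := by positivity
  unfold MeDc
  rw [phi_fMVU hx, nsq_fMVU hx]
  simp only [sub_self, Complex.normSq_zero, mul_zero, zero_add, Complex.normSq_one, mul_one]
  rw [← hAdef]
  show (σw2 * m) / (A + σw2 * m) * (σx2 + σw2 / A)
      ≤ (A * Complex.normSq (p - 1) + σw2 * n) / (A * Complex.normSq p + σw2 * n)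
        * (σx2 + σw2 / A)
  apply mul_le_mul_of_nonneg_right _ hC.le
  have hD1 : 0 < A + σw2 * m := by positivity
  have hD2 : 0 < A * Complex.normSq p + σw2 * n := by
    have := Complex.normSq_nonneg p
    nlinarith
  rw [div_le_div_iff₀ hD1 hD2]
  have hq1 : 0 ≤ Complex.normSq (p - 1) := Complex.normSq_nonneg _
  nlinarith [mul_le_mul_of_nonneg_left key (mul_nonneg hA.le hσw.le),
    mul_nonneg (mul_nonneg hA.le hA.le) hq1,
    mul_nonneg (mul_nonneg hσw.le hm.le) (mul_nonneg hA.le hq1)]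
end

section
/- Fix a parameter ρ > 0. Then for every channel coefficient h ∈ ℂ (including h = 0), the MVU filter achieves a strictly smaller zeroth-order symbol-estimate MSE than the MMSE filter: M_dc(f_MVU, h) < M_dc(f_MMSE, h), where f_MVU = x/‖x‖² and f_MMSE = ρ·x/(ρ‖x‖² + σw²). (Pointwise-in-h comparison underlying Proposition 8.) -/
open MeasureTheory

/-- Zeroth-order symbol-estimate MSE of the ZF equalizer for channel `h`. -/
noncomputable def Mdc {B : ℕ} (σx2 σw2 : ℝ) (h : ℂ) (x f : Fin B → ℂ) : ℝ :=
  (σx2 * (Complex.normSq h * Complex.normSq (phi x f - 1) + σw2 * nsq f) + σw2) /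
    (Complex.normSq h * Complex.normSq (phi x f) + σw2 * nsq f)

/-- The MMSE channel-estimating filter `f_MMSE = ρ·x / (ρ‖x‖² + σw²)`. -/
noncomputable def fMMSE {B : ℕ} (σw2 ρ : ℝ) (x : Fin B → ℂ) : Fin B → ℂ :=
  fun i => (ρ : ℂ) * x i / ((ρ * nsq x + σw2 : ℝ) : ℂ)

lemma sum_conj_mul {B : ℕ} (x : Fin B → ℂ) :
    ∑ i, (starRingEnd ℂ) (x i) * x i = ((nsq x : ℝ) : ℂ) := by
  simp [nsq, Complex.ofReal_sum]
  congr 1; funext i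
  rw [mul_comm, Complex.mul_conj]

lemma phi_smul {B : ℕ} (x : Fin B → ℂ) (c : ℂ) :
    phi x (fun i => c * x i) = (starRingEnd ℂ) c * ((nsq x : ℝ) : ℂ) := by
  rw [phi, ← sum_conj_mul]
  rw [Finset.mul_sum]
  congr 1; funext i
  simp [map_mul]; ring

lemma nsq_smul {B : ℕ} (x : Fin B → ℂ) (c : ℂ) :
    nsq (fun i => c * x i) = Complex.normSq c * nsq x := by
  simp [nsq, Complex.normSq_mul, Finset.mul_sum]

lemma key_real' (σx2 a H t : ℝ) (hσx : 0 < σx2)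
    (ha : 0 < a) (hH : 0 ≤ H) (ht0 : 0 < t) (ht1 : t < 1) (σw2 : ℝ) (hσw : 0 < σw2) :
    (σx2 * a + σw2) / (H + a) <
      (σx2 * (H * ((1-t)*(1-t)) + a * (t*t)) + σw2) / (H * (t*t) + a * (t*t)) := by
  have hD1 : 0 < H + a := by linarith
  have ht2 : 0 < t * t := mul_pos ht0 ht0
  have hD2 : 0 < H * (t*t) + a * (t*t) := by nlinarith [mul_nonneg hH ht2.le, mul_pos ha ht2]
  rw [div_lt_div_iff₀ hD1 hD2]
  have h2 : 0 < σx2 * H * ((1-t)*(1-t)) + σw2 * (1 - t*t) := by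
    nlinarith [mul_nonneg (mul_nonneg hσx.le hH) (mul_self_nonneg (1-t)),
      mul_pos hσw (show 0 < 1 - t*t by nlinarith)]
  nlinarith [mul_pos hD1 h2]

/-- Pointwise-in-`h` comparison underlying Proposition 8: for every channel
coefficient `h` (including `h = 0`), the MVU filter achieves a strictly smaller
zeroth-order symbol-estimate MSE than the MMSE filter. -/
theorem mvu_pointwise_strictly_better_than_mmse
    (B : ℕ) (hB : 1 ≤ B) (x : Fin B → ℂ) (hx : x ≠ 0)
    (σx2 σw2 : ℝ) (hσx : 0 < σx2) (hσw : 0 < σw2)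
    (ρ : ℝ) (hρ : 0 < ρ) :
    ∀ h : ℂ, Mdc σx2 σw2 h x (fMVU x) < Mdc σx2 σw2 h x (fMMSE σw2 ρ x) := by
  intro h
  have hX : 0 < nsq x := by
    have h0 : 0 ≤ nsq x := Finset.sum_nonneg fun i _ => Complex.normSq_nonneg _
    rcases h0.lt_or_eq with h1 | h1
    · exact h1
    · exfalso; apply hx; funext i
      have := (Finset.sum_eq_zero_iff_of_nonneg
        (fun i _ => Complex.normSq_nonneg (x i))).mp h1.symm i (Finset.mem_univ i)
      simpa using Complex.normSq_eq_zero.mp this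
  set X := nsq x with hXdef
  have hXne : X ≠ 0 := ne_of_gt hX
  have hXcne : (X : ℂ) ≠ 0 := by exact_mod_cast hXne
  have hd : 0 < ρ * X + σw2 := by positivity
  set d := ρ * X + σw2 with hddef
  have hdne : d ≠ 0 := ne_of_gt hd
  have hdcne : (d : ℂ) ≠ 0 := by exact_mod_cast hdne
  -- rewrite the filters as scalar multiples of x
  have hfMVU : fMVU x = fun i => ((X : ℂ)⁻¹) * x i := by
    funext i; simp [fMVU, div_eq_mul_inv, mul_comm]; exact Or.inl rfl
  have hfMMSE : fMMSE σw2 ρ x = fun i => ((ρ : ℂ) / (d : ℂ)) * x i := by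
    funext i; simp [fMMSE, hddef]; ring
  -- phi and nsq values
  have hphi1 : phi x (fMVU x) = 1 := by
    rw [hfMVU, phi_smul]
    rw [show ((X:ℂ)⁻¹) = (((X⁻¹ : ℝ)) : ℂ) by push_cast; ring]
    rw [Complex.conj_ofReal]
    rw [← Complex.ofReal_mul]
    rw [inv_mul_cancel₀ hXne]
    norm_num
  have hnsq1 : nsq (fMVU x) = 1 / X := by
    rw [hfMVU, nsq_smul]
    rw [show ((X:ℂ)⁻¹) = (((X⁻¹ : ℝ)) : ℂ) by push_cast; ring]
    rw [Complex.normSq_ofReal]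
    field_simp; rfl
  set t : ℝ := ρ * X / d with htdef
  have hphi2 : phi x (fMMSE σw2 ρ x) = ((t : ℝ) : ℂ) := by
    rw [hfMMSE, phi_smul]
    rw [show ((ρ:ℂ) / (d:ℂ)) = (((ρ / d : ℝ)) : ℂ) by push_cast; ring]
    rw [Complex.conj_ofReal, ← Complex.ofReal_mul]
    congr 1
    rw [htdef]; ring
  have hnsq2 : nsq (fMMSE σw2 ρ x) = ρ * ρ / (d * d) * X := by
    rw [hfMMSE, nsq_smul]
    rw [show ((ρ:ℂ) / (d:ℂ)) = (((ρ / d : ℝ)) : ℂ) by push_cast; ring]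
    rw [Complex.normSq_ofReal, div_mul_div_comm]
  set H : ℝ := Complex.normSq h with hHdef
  have hH : 0 ≤ H := Complex.normSq_nonneg h
  set a : ℝ := σw2 / X with hadef
  have ha : 0 < a := by positivity
  have ht0 : 0 < t := by rw [htdef]; positivity
  have ht1 : t < 1 := by
    rw [htdef, div_lt_one hd]; linarith
  have eL : Mdc σx2 σw2 h x (fMVU x) = (σx2 * a + σw2) / (H + a) := by
    rw [Mdc, hphi1, hnsq1, sub_self, Complex.normSq_zero, Complex.normSq_one, hadef]
    rw [← hHdef]
    ring_nf
  have eR : Mdc σx2 σw2 h x (fMMSE σw2 ρ x) =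
      (σx2 * (H * ((1-t)*(1-t)) + a * (t*t)) + σw2) / (H * (t*t) + a * (t*t)) := by
    rw [Mdc, hphi2, hnsq2]
    rw [show ((t:ℝ):ℂ) - 1 = (((t - 1 : ℝ)) : ℂ) by push_cast; ring]
    rw [Complex.normSq_ofReal, Complex.normSq_ofReal]
    have e1 : σw2 * (ρ * ρ / (d * d) * X) = a * (t * t) := by
      rw [hadef, htdef]; field_simp
    rw [e1]
    have e2 : (t - 1) * (t - 1) = (1 - t) * (1 - t) := by ring
    rw [e2]
  rw [eL, eR]
  exact key_real' σx2 a H t hσx ha hH ht0 ht1 σw2 hσw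
end
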